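/- Let ν be a Borel probability measure on ℝ^d with continuous positive density, a ∈ (1/(d+1), 1/d), with sup_x depth_ν(x) < a and Tukey median at 0. Suppose half-spaces H₁,…,H_{d+1} satisfy 0 ∈ ∂Hᵢ, ⋂Hᵢ = {0}, ν(Hᵢ) = depth_ν(0) for all i. If o ≠ 0, then depth_ν(o) < depth_ν(0). -/

import Mathlib

open MeasureTheory

/-- The half-space (Tukey) depth of a point. -/
noncomputable def depthPt {W : Type*} [NormedAddCommGroup W] [InnerProductSpace ℝ W]
    [MeasurableSpace W] (ν : Measure W) (x : W) : ℝ :=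
  sInf {r : ℝ | ∃ (m : W) (c : ℝ), m ≠ 0 ∧ (inner ℝ m x : ℝ) ≤ c ∧
    r = (ν {y : W | (inner ℝ m y : ℝ) ≤ c}).toReal}

theorem stmt18 (d : ℕ) (a : ℝ) (ha : 1 / (d + 1) < a) (ha' : a < 1 / d)
    (ν : Measure (EuclideanSpace ℝ (Fin d))) [IsProbabilityMeasure ν]
    (f : EuclideanSpace ℝ (Fin d) → ℝ)
    (hf : Continuous f) (hfpos : ∀ x, 0 < f x)
    (hν : ν = volume.withDensity (fun x => ENNReal.ofReal (f x)))
    (hsup : (⨆ x, depthPt ν x) < a)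
    (hmed : ∀ x, depthPt ν x ≤ depthPt ν (0 : EuclideanSpace ℝ (Fin d)))
    (n : Fin (d + 1) → EuclideanSpace ℝ (Fin d))
    (hunit : ∀ i, ‖n i‖ = 1)
    (hgen : (⋂ i, {x : EuclideanSpace ℝ (Fin d) | (inner ℝ (n i) x : ℝ) ≤ 0}) = {0})
    (hwgt : ∀ i, (ν {x : EuclideanSpace ℝ (Fin d) | (inner ℝ (n i) x : ℝ) ≤ 0}).toReal =
      depthPt ν (0 : EuclideanSpace ℝ (Fin d))) :
    ∀ o : EuclideanSpace ℝ (Fin d), o ≠ 0 →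
      depthPt ν o < depthPt ν (0 : EuclideanSpace ℝ (Fin d)) := by
  intro o ho
  -- find i with ⟪n i, o⟫ < 0
  have hno : -o ∉ (⋂ i, {x : EuclideanSpace ℝ (Fin d) | (inner ℝ (n i) x : ℝ) ≤ 0}) := by
    rw [hgen]
    simpa using (neg_ne_zero.mpr ho)
  obtain ⟨i, hi⟩ : ∃ i, ¬ ((inner ℝ (n i) (-o) : ℝ) ≤ 0) := by
    simpa [Set.mem_iInter] using hno
  have hc : (inner ℝ (n i) o : ℝ) < 0 := by
    rw [inner_neg_right] at hi; linarith [not_le.mp hi]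
  set c : ℝ := (inner ℝ (n i) o : ℝ) with hcdef
  have hni : n i ≠ 0 := by
    intro h; have := hunit i; rw [h, norm_zero] at this; norm_num at this
  have hcont : Continuous fun y : EuclideanSpace ℝ (Fin d) => (inner ℝ (n i) y : ℝ) :=
    continuous_const.inner continuous_id
  -- measurability
  have hm1 : MeasurableSet {y : EuclideanSpace ℝ (Fin d) | (inner ℝ (n i) y : ℝ) ≤ c} :=
    measurableSet_le hcont.measurable measurable_const
  have hm0 : MeasurableSet {y : EuclideanSpace ℝ (Fin d) | (inner ℝ (n i) y : ℝ) ≤ 0} :=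
    measurableSet_le hcont.measurable measurable_const
  -- depth o ≤ ν{⟪n i, ·⟫ ≤ c}
  have hdo : depthPt ν o ≤ (ν {y : EuclideanSpace ℝ (Fin d) | (inner ℝ (n i) y : ℝ) ≤ c}).toReal := by
    apply csInf_le
    · refine ⟨0, ?_⟩
      rintro r ⟨m, c', _, _, rfl⟩
      exact ENNReal.toReal_nonneg
    · exact ⟨n i, c, hni, le_of_eq rfl, rfl⟩
  -- the open strip has positive measure
  set U : Set (EuclideanSpace ℝ (Fin d)) :=
    {y | (inner ℝ (n i) y : ℝ) ∈ Set.Ioo c 0} with hUdef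
  have hUopen : IsOpen U := isOpen_Ioo.preimage hcont
  have hUne : U.Nonempty := by
    refine ⟨(c/2) • n i, ?_⟩
    have : (inner ℝ (n i) ((c/2) • n i) : ℝ) = c/2 := by
      rw [real_inner_smul_right, real_inner_self_eq_norm_sq, hunit i]
      ring
    constructor <;> rw [this] <;> linarith
  have hUpos : 0 < ν U := by
    rw [hν]
    rw [pos_iff_ne_zero]
    intro h
    rw [withDensity_apply_eq_zero (hf.measurable.ennreal_ofReal)] at h
    have : {x : EuclideanSpace ℝ (Fin d) | ENNReal.ofReal (f x) ≠ 0} ∩ U = U := by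
      ext x
      simp [ENNReal.ofReal_eq_zero, not_le, hfpos x]
    rw [this] at h
    exact (hUopen.measure_pos volume hUne).ne' h
  -- strict inequality of measures
  have hsub : {y : EuclideanSpace ℝ (Fin d) | (inner ℝ (n i) y : ℝ) ≤ c} ∪ U ⊆
      {y : EuclideanSpace ℝ (Fin d) | (inner ℝ (n i) y : ℝ) ≤ 0} := by
    rintro y (hy | hy)
    · exact le_trans hy hc.le
    · exact hy.2.le
  have hdisj : Disjoint {y : EuclideanSpace ℝ (Fin d) | (inner ℝ (n i) y : ℝ) ≤ c} U := by
    rw [Set.disjoint_left]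
    intro y hy hyU
    exact absurd hyU.1 (not_lt.mpr hy)
  have hlt : ν {y : EuclideanSpace ℝ (Fin d) | (inner ℝ (n i) y : ℝ) ≤ c} <
      ν {y : EuclideanSpace ℝ (Fin d) | (inner ℝ (n i) y : ℝ) ≤ 0} := by
    calc ν {y : EuclideanSpace ℝ (Fin d) | (inner ℝ (n i) y : ℝ) ≤ c}
        < ν {y : EuclideanSpace ℝ (Fin d) | (inner ℝ (n i) y : ℝ) ≤ c} + ν U := by
          exact ENNReal.lt_add_right (measure_ne_top ν _) hUpos.ne'
      _ = ν ({y : EuclideanSpace ℝ (Fin d) | (inner ℝ (n i) y : ℝ) ≤ c} ∪ U) :=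
          (measure_union hdisj (hUopen.measurableSet)).symm
      _ ≤ _ := measure_mono hsub
  have hfin : depthPt ν o < (ν {y : EuclideanSpace ℝ (Fin d) | (inner ℝ (n i) y : ℝ) ≤ 0}).toReal :=
    lt_of_le_of_lt hdo (by
      exact (ENNReal.toReal_lt_toReal (measure_ne_top ν _) (measure_ne_top ν _)).mpr hlt)
  rw [hwgt i] at hfin
  exact hfin
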